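/- Let (E, ζ) be a measure space, s a probability density and f, f' nonnegative integrable functions with g = (f+f')/2, all with respect to ζ. Define T̄ = (1/√2)[∫ ((√f' − √f)/√g) s dζ + ∫ √g(√f' − √f) dζ + ∫ (f − f') dζ] (convention 0/0 = 0). Then with h²(p,q) = (1/2)∫(√p − √q)² dζ: h²(s,f') − h²(s,f) = −(1/√2)T̄ + (1/2)∫ √(f'/g)(√s − √g)² dζ − (1/2)∫ √(f/g)(√s − √g)² dζ. -/

import Mathlib

open MeasureTheory

theorem stmt_13 {E : Type*} [MeasurableSpace E] (ζ : Measure E)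
    (s f f' : E → ℝ)
    (hsm : Measurable s) (hfm : Measurable f) (hf'm : Measurable f')
    (hs : ∀ x, 0 ≤ s x) (hf : ∀ x, 0 ≤ f x) (hf' : ∀ x, 0 ≤ f' x)
    (hsi : Integrable s ζ) (hfi : Integrable f ζ) (hf'i : Integrable f' ζ)
    (hprob : ∫ x, s x ∂ζ = 1)
    (g : E → ℝ) (hg : g = fun x => (f x + f' x) / 2)
    (T : ℝ)
    (hT : T = (1 / Real.sqrt 2) *
      ((∫ x, ((Real.sqrt (f' x) - Real.sqrt (f x)) / Real.sqrt (g x)) * s x ∂ζ) +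
       (∫ x, Real.sqrt (g x) * (Real.sqrt (f' x) - Real.sqrt (f x)) ∂ζ) +
       (∫ x, (f x - f' x) ∂ζ))) :
    (1 / 2) * ∫ x, (Real.sqrt (s x) - Real.sqrt (f' x)) ^ 2 ∂ζ -
      (1 / 2) * ∫ x, (Real.sqrt (s x) - Real.sqrt (f x)) ^ 2 ∂ζ =
    -(1 / Real.sqrt 2) * T +
      (1 / 2) * ∫ x, Real.sqrt (f' x / g x) * (Real.sqrt (s x) - Real.sqrt (g x)) ^ 2 ∂ζ -
      (1 / 2) * ∫ x, Real.sqrt (f x / g x) * (Real.sqrt (s x) - Real.sqrt (g x)) ^ 2 ∂ζ := by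
  have hg0 : ∀ x, 0 ≤ g x := fun x => by simp only [hg]; exact div_nonneg (add_nonneg (hf x) (hf' x)) (by norm_num)
  have hgm : Measurable g := by rw [hg]; exact (hfm.add hf'm).div_const 2
  have hgi : Integrable g ζ := by rw [hg]; exact (hfi.add hf'i).div_const 2
  have hfle : ∀ x, f x ≤ 2 * g x := fun x => by rw [hg]; dsimp; linarith [hf' x]
  have hf'le : ∀ x, f' x ≤ 2 * g x := fun x => by rw [hg]; dsimp; linarith [hf x]
  -- product integrabilities
  have prod_int : ∀ (p q : E → ℝ), Measurable p → Measurable q → (∀ x, 0 ≤ p x) →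
      (∀ x, 0 ≤ q x) → Integrable p ζ → Integrable q ζ →
      Integrable (fun x => Real.sqrt (p x) * Real.sqrt (q x)) ζ := by
    intro p q hpm hqm hp hq hpi hqi
    apply Integrable.mono' ((hpi.add hqi).div_const 2)
      ((hpm.sqrt.mul hqm.sqrt).aestronglyMeasurable)
    filter_upwards with x
    simp only [Pi.add_apply, Pi.mul_apply]
    rw [Real.norm_eq_abs, abs_of_nonneg (by positivity)]
    nlinarith [Real.sq_sqrt (hp x), Real.sq_sqrt (hq x),
      sq_nonneg (Real.sqrt (p x) - Real.sqrt (q x))]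
  have hu : Integrable (fun x => Real.sqrt (s x) * Real.sqrt (f' x)) ζ :=
    prod_int s f' hsm hf'm hs hf' hsi hf'i
  have hv : Integrable (fun x => Real.sqrt (s x) * Real.sqrt (f x)) ζ :=
    prod_int s f hsm hfm hs hf hsi hfi
  have hb' : Integrable (fun x => Real.sqrt (g x) * Real.sqrt (f' x)) ζ :=
    prod_int g f' hgm hf'm hg0 hf' hgi hf'i
  have hb : Integrable (fun x => Real.sqrt (g x) * Real.sqrt (f x)) ζ :=
    prod_int g f hgm hfm hg0 hf hgi hfi
  -- ratio integrabilities
  have ratio_int : ∀ (p : E → ℝ), Measurable p → (∀ x, 0 ≤ p x) → (∀ x, p x ≤ 2 * g x) →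
      Integrable (fun x => Real.sqrt (p x) / Real.sqrt (g x) * s x) ζ := by
    intro p hpm hp hple
    apply Integrable.mono' (hsi.const_mul (Real.sqrt 2))
      (((hpm.sqrt.div hgm.sqrt).mul hsm).aestronglyMeasurable)
    filter_upwards with x
    simp only [Pi.mul_apply, Pi.div_apply]
    rw [Real.norm_eq_abs, abs_of_nonneg (mul_nonneg (div_nonneg (Real.sqrt_nonneg _)
      (Real.sqrt_nonneg _)) (hs x))]
    have hratio : Real.sqrt (p x) / Real.sqrt (g x) ≤ Real.sqrt 2 := by
      rcases eq_or_lt_of_le (hg0 x) with h | h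
      · simp [← h]
      · rw [div_le_iff₀ (Real.sqrt_pos.mpr h), ← Real.sqrt_mul (by norm_num)]
        exact Real.sqrt_le_sqrt (hple x)
    exact mul_le_mul_of_nonneg_right hratio (hs x)
  have ha' : Integrable (fun x => Real.sqrt (f' x) / Real.sqrt (g x) * s x) ζ :=
    ratio_int f' hf'm hf' hf'le
  have ha : Integrable (fun x => Real.sqrt (f x) / Real.sqrt (g x) * s x) ζ :=
    ratio_int f hfm hf hfle
  -- pointwise expansions and integral identities
  have I1 : ∫ x, (Real.sqrt (s x) - Real.sqrt (f' x)) ^ 2 ∂ζ =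
      (∫ x, s x ∂ζ) + (∫ x, f' x ∂ζ) - 2 * ∫ x, Real.sqrt (s x) * Real.sqrt (f' x) ∂ζ := by
    have hpt : ∀ x, (Real.sqrt (s x) - Real.sqrt (f' x)) ^ 2 =
        s x + f' x - 2 * (Real.sqrt (s x) * Real.sqrt (f' x)) := by
      intro x
      have h1 := Real.sq_sqrt (hs x)
      have h2 := Real.sq_sqrt (hf' x)
      nlinarith
    simp only [hpt]
    have e1 : ∫ x, s x + f' x - 2 * (Real.sqrt (s x) * Real.sqrt (f' x)) ∂ζ =
        (∫ x, s x + f' x ∂ζ) - ∫ x, 2 * (Real.sqrt (s x) * Real.sqrt (f' x)) ∂ζ :=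
      integral_sub (hsi.add hf'i) (hu.const_mul 2)
    have e2 : ∫ x, s x + f' x ∂ζ = (∫ x, s x ∂ζ) + ∫ x, f' x ∂ζ := integral_add hsi hf'i
    rw [e1, e2, integral_const_mul]
  have I2 : ∫ x, (Real.sqrt (s x) - Real.sqrt (f x)) ^ 2 ∂ζ =
      (∫ x, s x ∂ζ) + (∫ x, f x ∂ζ) - 2 * ∫ x, Real.sqrt (s x) * Real.sqrt (f x) ∂ζ := by
    have hpt : ∀ x, (Real.sqrt (s x) - Real.sqrt (f x)) ^ 2 =
        s x + f x - 2 * (Real.sqrt (s x) * Real.sqrt (f x)) := by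
      intro x
      have h1 := Real.sq_sqrt (hs x)
      have h2 := Real.sq_sqrt (hf x)
      nlinarith
    simp only [hpt]
    have e1 : ∫ x, s x + f x - 2 * (Real.sqrt (s x) * Real.sqrt (f x)) ∂ζ =
        (∫ x, s x + f x ∂ζ) - ∫ x, 2 * (Real.sqrt (s x) * Real.sqrt (f x)) ∂ζ :=
      integral_sub (hsi.add hfi) (hv.const_mul 2)
    have e2 : ∫ x, s x + f x ∂ζ = (∫ x, s x ∂ζ) + ∫ x, f x ∂ζ := integral_add hsi hfi
    rw [e1, e2, integral_const_mul]
  have key_pt : ∀ (p : E → ℝ), (∀ x, 0 ≤ p x) → (∀ x, p x ≤ 2 * g x) → ∀ x,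
      Real.sqrt (p x / g x) * (Real.sqrt (s x) - Real.sqrt (g x)) ^ 2 =
      Real.sqrt (p x) / Real.sqrt (g x) * s x + Real.sqrt (g x) * Real.sqrt (p x)
        - 2 * (Real.sqrt (s x) * Real.sqrt (p x)) := by
    intro p hp hple x
    rw [Real.sqrt_div (hp x)]
    rcases eq_or_lt_of_le (hg0 x) with h | h
    · have hp0 : p x = 0 := le_antisymm (by linarith [hple x]) (hp x)
      simp [← h, hp0]
    · have hgs : Real.sqrt (g x) ≠ 0 := (Real.sqrt_pos.mpr h).ne'
      have h1 := Real.sq_sqrt (hs x)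
      have h2 := Real.sq_sqrt (hg0 x)
      field_simp
      ring_nf
      nlinarith [Real.sqrt_nonneg (p x), Real.sqrt_nonneg (g x), Real.sqrt_nonneg (s x)]
  have J1 : ∫ x, Real.sqrt (f' x / g x) * (Real.sqrt (s x) - Real.sqrt (g x)) ^ 2 ∂ζ =
      (∫ x, Real.sqrt (f' x) / Real.sqrt (g x) * s x ∂ζ)
      + (∫ x, Real.sqrt (g x) * Real.sqrt (f' x) ∂ζ)
      - 2 * ∫ x, Real.sqrt (s x) * Real.sqrt (f' x) ∂ζ := by
    simp only [key_pt f' hf' hf'le]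
    have e1 : ∫ x, Real.sqrt (f' x) / Real.sqrt (g x) * s x + Real.sqrt (g x) * Real.sqrt (f' x)
        - 2 * (Real.sqrt (s x) * Real.sqrt (f' x)) ∂ζ =
        (∫ x, Real.sqrt (f' x) / Real.sqrt (g x) * s x + Real.sqrt (g x) * Real.sqrt (f' x) ∂ζ)
        - ∫ x, 2 * (Real.sqrt (s x) * Real.sqrt (f' x)) ∂ζ :=
      integral_sub (ha'.add hb') (hu.const_mul 2)
    have e2 : ∫ x, Real.sqrt (f' x) / Real.sqrt (g x) * s x + Real.sqrt (g x) * Real.sqrt (f' x) ∂ζ =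
        (∫ x, Real.sqrt (f' x) / Real.sqrt (g x) * s x ∂ζ) + ∫ x, Real.sqrt (g x) * Real.sqrt (f' x) ∂ζ :=
      integral_add ha' hb'
    rw [e1, e2, integral_const_mul]
  have J2 : ∫ x, Real.sqrt (f x / g x) * (Real.sqrt (s x) - Real.sqrt (g x)) ^ 2 ∂ζ =
      (∫ x, Real.sqrt (f x) / Real.sqrt (g x) * s x ∂ζ)
      + (∫ x, Real.sqrt (g x) * Real.sqrt (f x) ∂ζ)
      - 2 * ∫ x, Real.sqrt (s x) * Real.sqrt (f x) ∂ζ := by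
    simp only [key_pt f hf hfle]
    have e1 : ∫ x, Real.sqrt (f x) / Real.sqrt (g x) * s x + Real.sqrt (g x) * Real.sqrt (f x)
        - 2 * (Real.sqrt (s x) * Real.sqrt (f x)) ∂ζ =
        (∫ x, Real.sqrt (f x) / Real.sqrt (g x) * s x + Real.sqrt (g x) * Real.sqrt (f x) ∂ζ)
        - ∫ x, 2 * (Real.sqrt (s x) * Real.sqrt (f x)) ∂ζ :=
      integral_sub (ha.add hb) (hv.const_mul 2)
    have e2 : ∫ x, Real.sqrt (f x) / Real.sqrt (g x) * s x + Real.sqrt (g x) * Real.sqrt (f x) ∂ζ =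
        (∫ x, Real.sqrt (f x) / Real.sqrt (g x) * s x ∂ζ) + ∫ x, Real.sqrt (g x) * Real.sqrt (f x) ∂ζ :=
      integral_add ha hb
    rw [e1, e2, integral_const_mul]
  have K1 : ∫ x, (Real.sqrt (f' x) - Real.sqrt (f x)) / Real.sqrt (g x) * s x ∂ζ =
      (∫ x, Real.sqrt (f' x) / Real.sqrt (g x) * s x ∂ζ)
      - ∫ x, Real.sqrt (f x) / Real.sqrt (g x) * s x ∂ζ := by
    have hpt : ∀ x, (Real.sqrt (f' x) - Real.sqrt (f x)) / Real.sqrt (g x) * s x =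
        Real.sqrt (f' x) / Real.sqrt (g x) * s x - Real.sqrt (f x) / Real.sqrt (g x) * s x := by
      intro x; rw [sub_div, sub_mul]
    simp only [hpt]
    exact integral_sub ha' ha
  have K2 : ∫ x, Real.sqrt (g x) * (Real.sqrt (f' x) - Real.sqrt (f x)) ∂ζ =
      (∫ x, Real.sqrt (g x) * Real.sqrt (f' x) ∂ζ)
      - ∫ x, Real.sqrt (g x) * Real.sqrt (f x) ∂ζ := by
    have hpt : ∀ x, Real.sqrt (g x) * (Real.sqrt (f' x) - Real.sqrt (f x)) =
        Real.sqrt (g x) * Real.sqrt (f' x) - Real.sqrt (g x) * Real.sqrt (f x) := by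
      intro x; rw [mul_sub]
    simp only [hpt]
    exact integral_sub hb' hb
  have K3 : ∫ x, (f x - f' x) ∂ζ = (∫ x, f x ∂ζ) - ∫ x, f' x ∂ζ := integral_sub hfi hf'i
  have hs2 : Real.sqrt 2 * Real.sqrt 2 = 2 := Real.mul_self_sqrt (by norm_num)
  have hs2ne : Real.sqrt 2 ≠ 0 := by positivity
  rw [hT, I1, I2, J1, J2, hprob]
  rw [K1, K2, K3]
  field_simp
  ring_nf
  rw [Real.sq_sqrt (by norm_num : (0:ℝ) ≤ 2)]
  ring
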